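/- arXiv:0910.5594 — 5 statements merged into one kernel-verified Lean document; each statement's English description precedes it below -/
import Mathlib

section
/- For all integers m ≥ 1 and 0 ≤ k ≤ m, the quantity a_{m,k} := (2m-k)!/(2^{2m-k} · m! · (m-k)!) satisfies a_{m,k} ≤ C · e^{-k²/(4(2m-k))} / √(2m-k) for some absolute constant C > 0 (independent of m and k). -/
open Real

noncomputable def aux_a (m k : ℕ) : ℝ :=
  ((2 * m - k).factorial : ℝ) / (2 ^ (2 * m - k) * m.factorial * (m - k).factorial)

lemma aux_a_nonneg (m k : ℕ) : 0 ≤ aux_a m k := by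
  unfold aux_a
  positivity

lemma aux_a_rec (m k : ℕ) (hk : k + 1 ≤ m) :
    aux_a m (k + 1) = aux_a m k * (2 * ((m : ℝ) - k)) / (2 * m - k) := by
  have h1 : k + 1 ≤ 2 * m := by omega
  have c1 : ((2 * m - (k + 1) : ℕ) : ℝ) = 2 * m - (k + 1) := by
    push_cast [Nat.cast_sub h1]; ring
  have c2 : ((m - (k + 1) : ℕ) : ℝ) = m - (k + 1) := by
    push_cast [Nat.cast_sub hk]; ring
  have e1 : ((2 * m - k).factorial : ℝ) = (2 * (m:ℝ) - k) * ((2 * m - (k+1)).factorial : ℝ) := by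
    rw [show 2 * m - k = (2 * m - (k + 1)) + 1 by omega, Nat.factorial_succ]
    push_cast [c1]; ring
  have e2 : ((m - k).factorial : ℝ) = ((m:ℝ) - k) * ((m - (k+1)).factorial : ℝ) := by
    rw [show m - k = (m - (k + 1)) + 1 by omega, Nat.factorial_succ]
    push_cast [c2]; ring
  have e3 : ((2:ℝ)) ^ (2 * m - k) = 2 * 2 ^ (2 * m - (k+1)) := by
    rw [show 2 * m - k = (2 * m - (k + 1)) + 1 by omega, pow_succ]; ring
  unfold aux_a
  rw [e1, e2, e3]
  have hfac1 : ((2 * m - (k+1)).factorial : ℝ) ≠ 0 := by positivity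
  have hfac2 : ((m - (k+1)).factorial : ℝ) ≠ 0 := by positivity
  have hmfac : (m.factorial : ℝ) ≠ 0 := by positivity
  have hp : ((2:ℝ)) ^ (2 * m - (k+1)) ≠ 0 := by positivity
  have hmk : ((m:ℝ) - k) ≠ 0 := by
    have : (k:ℝ) < m := by exact_mod_cast (by omega : k < m)
    linarith
  have hne : (2 * (m:ℝ) - k) ≠ 0 := by
    have : (k:ℝ) < 2 * m := by exact_mod_cast (by omega : k < 2 * m)
    linarith
  field_simp

lemma aux_a_le (m k : ℕ) (hk : k ≤ m) (hm : 1 ≤ m) :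
    aux_a m k ≤ aux_a m 0 * Real.exp (-((k:ℝ) * (k - 1)) / (4 * m)) := by
  induction k with
  | zero => simp
  | succ k ih =>
    have hk' : k ≤ m := by omega
    have ih' := ih hk'
    have hmpos : (0:ℝ) < m := by exact_mod_cast hm
    have hkm : (k:ℝ) ≤ m := by exact_mod_cast hk'
    have hden : (0:ℝ) < 2 * m - k := by linarith
    have hratio : (2 * ((m : ℝ) - k)) / (2 * m - k) ≤ Real.exp (-((k:ℝ) / (2 * m))) := by
      have h1 : (2 * ((m : ℝ) - k)) / (2 * m - k) = 1 - (k:ℝ) / (2 * m - k) := by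
        field_simp; ring
      rw [h1]
      have h2 : (k:ℝ) / (2 * m) ≤ (k:ℝ) / (2 * m - k) :=
        div_le_div_of_nonneg_left (Nat.cast_nonneg k) hden (by linarith)
      calc 1 - (k:ℝ) / (2 * m - k) ≤ Real.exp (-((k:ℝ) / (2 * m - k))) := by
            have := Real.add_one_le_exp (-((k:ℝ) / (2 * m - k)))
            linarith
        _ ≤ Real.exp (-((k:ℝ) / (2 * m))) := Real.exp_le_exp.mpr (by linarith)
    rw [aux_a_rec m k hk]
    have hratio_nonneg : 0 ≤ (2 * ((m : ℝ) - k)) / (2 * m - k) :=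
      div_nonneg (by linarith) (by linarith)
    have key : aux_a m k * (2 * ((m : ℝ) - k)) / (2 * m - k)
        ≤ aux_a m 0 * Real.exp (-(((k:ℝ)+1) * ((k:ℝ)+1 - 1)) / (4 * m)) := by
      calc aux_a m k * (2 * ((m : ℝ) - k)) / (2 * m - k)
          = aux_a m k * ((2 * ((m : ℝ) - k)) / (2 * m - k)) := by ring
        _ ≤ (aux_a m 0 * Real.exp (-((k:ℝ) * (k - 1)) / (4 * m))) *
              Real.exp (-((k:ℝ) / (2 * m))) := by
            apply mul_le_mul ih' hratio hratio_nonneg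
            exact mul_nonneg (aux_a_nonneg m 0) (Real.exp_pos _).le
        _ = aux_a m 0 * Real.exp (-(((k:ℝ)+1) * ((k:ℝ)+1 - 1)) / (4 * m)) := by
            rw [mul_assoc, ← Real.exp_add]
            congr 1
            field_simp
            ring
    calc aux_a m k * (2 * ((m : ℝ) - k)) / (2 * m - k)
        ≤ aux_a m 0 * Real.exp (-(((k:ℝ)+1) * ((k:ℝ)+1 - 1)) / (4 * m)) := key
      _ = aux_a m 0 * Real.exp (-((((k+1:ℕ)):ℝ) * (((k+1:ℕ):ℝ) - 1)) / (4 * m)) := by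
          push_cast; ring_nf

lemma centralBinom_bound (m : ℕ) :
    (m.centralBinom : ℝ) / 4 ^ m ≤ 1 / Real.sqrt (3 * m + 1) := by
  induction m with
  | zero => simp
  | succ m ih =>
    push_cast
    have hrec := Nat.succ_mul_centralBinom_succ m
    have hrecR : ((m:ℝ)+1) * ((m+1 : ℕ).centralBinom : ℝ) = 2 * (2 * m + 1) * m.centralBinom := by
      exact_mod_cast hrec
    have hm1 : (0:ℝ) < (m:ℝ) + 1 := by positivity
    have hval : ((m+1 : ℕ).centralBinom : ℝ) / 4 ^ (m+1)
        = (m.centralBinom : ℝ) / 4 ^ m * ((2 * m + 1) / (2 * (m + 1))) := by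
      have hc : ((m+1 : ℕ).centralBinom : ℝ) = 2 * (2 * m + 1) * m.centralBinom / (m + 1) := by
        rw [eq_div_iff (by positivity)]
        linarith [hrecR]
      rw [hc]
      field_simp
      ring
    rw [hval]
    have hconv : (3:ℝ) * ((m:ℝ) + 1) + 1 = 3 * m + 4 := by ring
    rw [hconv]
    have hs1 : (0:ℝ) < Real.sqrt (3 * m + 1) := Real.sqrt_pos.mpr (by positivity)
    have hs2 : (0:ℝ) < Real.sqrt (3 * (m:ℝ) + 4) := Real.sqrt_pos.mpr (by positivity)
    have key : Real.sqrt (3 * (m:ℝ) + 4) * (2 * m + 1) ≤ Real.sqrt (3 * m + 1) * (2 * (m + 1)) := by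
      have hsq : (Real.sqrt (3 * (m:ℝ) + 4) * (2 * m + 1)) ^ 2
          ≤ (Real.sqrt (3 * (m:ℝ) + 1) * (2 * (m + 1))) ^ 2 := by
        rw [mul_pow, mul_pow, Real.sq_sqrt (by positivity), Real.sq_sqrt (by positivity)]
        nlinarith [sq_nonneg ((m:ℝ))]
      have h1 : (0:ℝ) ≤ Real.sqrt (3 * (m:ℝ) + 4) * (2 * m + 1) := by positivity
      have h2 : (0:ℝ) ≤ Real.sqrt (3 * (m:ℝ) + 1) * (2 * (m + 1)) := by positivity
      nlinarith [hsq]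
    have hstep : (1 / Real.sqrt (3 * (m:ℝ) + 1)) * ((2 * (m:ℝ) + 1) / (2 * (m + 1)))
        ≤ 1 / Real.sqrt (3 * (m:ℝ) + 4) := by
      rw [div_mul_div_comm, one_mul, div_le_div_iff₀ (by positivity) hs2]
      nlinarith [key]
    have hnn : (0:ℝ) ≤ (2 * (m:ℝ) + 1) / (2 * (m + 1)) := by positivity
    calc (m.centralBinom : ℝ) / 4 ^ m * ((2 * (m:ℝ) + 1) / (2 * (m + 1)))
        ≤ (1 / Real.sqrt (3 * m + 1)) * ((2 * (m:ℝ) + 1) / (2 * (m + 1))) :=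
          mul_le_mul_of_nonneg_right ih hnn
      _ ≤ 1 / Real.sqrt (3 * (m:ℝ) + 4) := hstep

theorem stmt0 :
    ∃ C : ℝ, 0 < C ∧ ∀ m k : ℕ, 1 ≤ m → k ≤ m →
      ((2 * m - k).factorial : ℝ) / (2 ^ (2 * m - k) * m.factorial * (m - k).factorial)
        ≤ C * Real.exp (-(k : ℝ) ^ 2 / (4 * (2 * (m : ℝ) - k))) /
            Real.sqrt (2 * (m : ℝ) - k) := by
  refine ⟨Real.exp 1, Real.exp_pos 1, fun m k hm hk => ?_⟩
  have hmpos : (0:ℝ) < m := by exact_mod_cast hm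
  have hkm : (k:ℝ) ≤ m := by exact_mod_cast hk
  have hden : (0:ℝ) < 2 * m - k := by linarith
  have h1 := aux_a_le m k hk hm
  have ha0 : aux_a m 0 ≤ 1 / Real.sqrt (3 * m + 1) := by
    have hfac : m.centralBinom * m.factorial * m.factorial = (2 * m).factorial := by
      have h := Nat.choose_mul_factorial_mul_factorial (show m ≤ 2 * m by omega)
      rw [show 2 * m - m = m from by omega] at h
      rw [Nat.centralBinom]
      exact h
    have heq : aux_a m 0 = (m.centralBinom : ℝ) / 4 ^ m := by
      unfold aux_a
      simp only [Nat.sub_zero]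
      have hfacR : ((2 * m).factorial : ℝ) = m.centralBinom * m.factorial * m.factorial := by
        exact_mod_cast hfac.symm
      rw [hfacR]
      have h4 : ((2:ℝ) ^ (2 * m)) = 4 ^ m := by rw [pow_mul]; norm_num
      rw [h4]
      have hf : (m.factorial : ℝ) ≠ 0 := by positivity
      field_simp
    rw [heq]
    exact centralBinom_bound m
  have hexp : Real.exp (-((k:ℝ) * (k - 1)) / (4 * m))
      ≤ Real.exp 1 * Real.exp (-(k : ℝ) ^ 2 / (4 * (2 * (m : ℝ) - k))) := by
    rw [← Real.exp_add]
    apply Real.exp_le_exp.mpr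
    have hknn : (0:ℝ) ≤ k := Nat.cast_nonneg k
    have h2 : (k:ℝ)^2 / (4 * (2 * m - k)) ≤ (k:ℝ)^2 / (4 * m) :=
      div_le_div_of_nonneg_left (by positivity) (by positivity) (by linarith)
    have h3 : (k:ℝ) / (4 * m) ≤ 1 := by
      rw [div_le_one (by positivity)]; linarith
    have hexpand : -((k:ℝ) * (k - 1)) / (4 * m) = -((k:ℝ)^2 / (4 * m)) + k / (4 * m) := by
      ring
    rw [hexpand, neg_div]
    linarith
  have hsq : Real.sqrt (2 * (m:ℝ) - k) ≤ Real.sqrt (3 * m + 1) :=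
    Real.sqrt_le_sqrt (by linarith)
  have hsqpos : (0:ℝ) < Real.sqrt (2 * (m:ℝ) - k) := Real.sqrt_pos.mpr hden
  have hinv : 1 / Real.sqrt (3 * (m:ℝ) + 1) ≤ 1 / Real.sqrt (2 * (m:ℝ) - k) :=
    one_div_le_one_div_of_le hsqpos hsq
  show aux_a m k ≤ _
  calc aux_a m k ≤ (1 / Real.sqrt (3 * m + 1)) * Real.exp (-((k:ℝ) * (k - 1)) / (4 * m)) :=
        h1.trans (mul_le_mul_of_nonneg_right ha0 (Real.exp_pos _).le)
    _ ≤ (1 / Real.sqrt (2 * (m:ℝ) - k)) *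
          (Real.exp 1 * Real.exp (-(k : ℝ) ^ 2 / (4 * (2 * (m : ℝ) - k)))) := by
        apply mul_le_mul hinv hexp (Real.exp_pos _).le (by positivity)
    _ = Real.exp 1 * Real.exp (-(k : ℝ) ^ 2 / (4 * (2 * (m : ℝ) - k))) /
          Real.sqrt (2 * (m : ℝ) - k) := by ring
end

section
/- Let c_{m,k} be defined by the recurrences c_{1,0} = c_{1,1} = 1, c_{m,m} = c_{m-1,m-1}, c_{m,m-1} = (1/2)c_{m-1,m-1} + c_{m-1,m-2}, c_{m,m-k} = Σ_{l=0}^{k} 2^{-(k-l)} c_{m-1,m-1-l} for 2 ≤ k ≤ m-1, and c_{m,0} = Σ_{l=0}^{m-1} c_{m-1,l}/2^l. Then for all m ≥ 1 and 0 ≤ k ≤ m, c_{m,k} = (2m-k)!/(2^{m-k} · m! · (m-k)!). -/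
open Finset

lemma hstick (n : ℕ) : ∀ k, ∑ l ∈ Finset.range (k + 1), (n + l).choose l = (n + k + 1).choose k := by
  intro k
  induction k with
  | zero => simp
  | succ k ih =>
      rw [Finset.sum_range_succ, ih, show n + (k + 1) = n + k + 1 from by omega]
      exact (Nat.choose_succ_succ (n + k + 1) k).symm

lemma castG (m k : ℕ) (hk : k ≤ m) :
    ((2 * m - k).factorial : ℝ) / (2 ^ (m - k) * m.factorial * (m - k).factorial)
      = ((2 * m - k).choose m : ℝ) / 2 ^ (m - k) := by
  have h := Nat.choose_mul_factorial_mul_factorial (show m ≤ 2 * m - k by omega)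
  have h2 : 2 * m - k - m = m - k := by omega
  rw [h2] at h
  rw [← h]
  have hm : (m.factorial : ℝ) ≠ 0 := by exact_mod_cast m.factorial_ne_zero
  have hmk : ((m - k).factorial : ℝ) ≠ 0 := by exact_mod_cast (m - k).factorial_ne_zero
  have hp : (2 : ℝ) ^ (m - k) ≠ 0 := by positivity
  push_cast
  field_simp

lemma central (m : ℕ) : (2 * m + 2).choose (m + 1) = 2 * (2 * m + 1).choose m := by
  have h1 : (2 * m + 2).choose (m + 1) = (2 * m + 1).choose m + (2 * m + 1).choose (m + 1) :=
    Nat.choose_succ_succ _ _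
  have h2 := Nat.choose_symm (show m + 1 ≤ 2 * m + 1 by omega)
  rw [show 2 * m + 1 - (m + 1) = m from by omega] at h2
  omega

theorem stmt1 (c : ℕ → ℕ → ℝ)
    (h10 : c 1 0 = 1) (h11 : c 1 1 = 1)
    (hdiag : ∀ m, 2 ≤ m → c m m = c (m - 1) (m - 1))
    (hsub : ∀ m, 2 ≤ m → c m (m - 1) = (1 / 2) * c (m - 1) (m - 1) + c (m - 1) (m - 2))
    (hmid : ∀ m k, 2 ≤ k → k ≤ m - 1 →
      c m (m - k) = ∑ l ∈ Finset.range (k + 1), (1 / 2 : ℝ) ^ (k - l) * c (m - 1) (m - 1 - l))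
    (h0 : ∀ m, 2 ≤ m → c m 0 = ∑ l ∈ Finset.range m, c (m - 1) l / 2 ^ l) :
    ∀ m k, 1 ≤ m → k ≤ m →
      c m k = ((2 * m - k).factorial : ℝ) / (2 ^ (m - k) * m.factorial * (m - k).factorial) := by
  suffices H : ∀ m, 1 ≤ m → ∀ k, k ≤ m → c m k = ((2 * m - k).choose m : ℝ) / 2 ^ (m - k) by
    intro m k hm hk
    rw [castG m k hk]
    exact H m hm k hk
  intro m hm
  induction m, hm using Nat.le_induction with
  | base =>
      intro k hk
      interval_cases k
      · simpa using h10
      · simpa using h11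
  | succ m hm IH =>
      intro k hk
      by_cases hkm1 : k = m + 1
      · rw [hkm1, hdiag (m + 1) (by omega)]
        simp only [Nat.add_sub_cancel]
        rw [IH m le_rfl]
        have e1 : 2 * m - m = m := by omega
        have e2 : 2 * (m + 1) - (m + 1) = m + 1 := by omega
        simp [e1, e2]
      by_cases hkm : k = m
      · rw [hkm]
        have h := hsub (m + 1) (by omega)
        simp only [Nat.add_sub_cancel] at h
        obtain ⟨j, rfl⟩ : ∃ j, m = j + 1 := ⟨m - 1, by omega⟩
        rw [show j + 1 + 1 - 2 = j from rfl] at h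
        rw [h, IH (j + 1) le_rfl, IH j (by omega)]
        rw [show 2 * (j + 1) - (j + 1) = j + 1 from by omega,
          show j + 1 - (j + 1) = 0 from by omega,
          show 2 * (j + 1) - j = j + 2 from by omega,
          show j + 1 - j = 1 from by omega,
          show 2 * (j + 1 + 1) - (j + 1) = j + 3 from by omega,
          show j + 1 + 1 - (j + 1) = 1 from by omega]
        rw [Nat.choose_self, Nat.choose_succ_self_right,
          show j + 3 = (j + 2) + 1 from by omega,
          show j + 1 + 1 = (j + 1) + 1 from rfl, Nat.choose_succ_self_right]
        push_cast
        norm_num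
        ring
      by_cases hk0 : k = 0
      · rw [hk0, h0 (m + 1) (by omega)]
        simp only [Nat.add_sub_cancel]
        have hterm : ∀ l ∈ Finset.range (m + 1),
            c m l / 2 ^ l = (fun j => ((m + j).choose j : ℝ) * (1 / 2) ^ m) (m + 1 - 1 - l) := by
          intro l hl
          rw [Finset.mem_range] at hl
          have hl' : l ≤ m := by omega
          have e1 : 2 * m - l = m + (m - l) := by omega
          have e2 : m + 1 - 1 - l = m - l := by omega
          have e3 : (m + (m - l)).choose m = (m + (m - l)).choose (m - l) := by
            have := Nat.choose_symm (show m ≤ m + (m - l) from Nat.le_add_right _ _)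
            rw [Nat.add_sub_cancel_left] at this
            omega
          rw [IH l hl', e1, e2, e3]
          show ((m + (m - l)).choose (m - l) : ℝ) / 2 ^ (m - l) / 2 ^ l
              = ((m + (m - l)).choose (m - l) : ℝ) * (1 / 2) ^ m
          rw [div_pow, one_pow, mul_one_div, div_div, ← pow_add,
            show (m - l) + l = m from by omega]
        rw [Finset.sum_congr rfl hterm,
          Finset.sum_range_reflect (fun j => ((m + j).choose j : ℝ) * (1 / 2) ^ m) (m + 1),
          ← Finset.sum_mul, ← Nat.cast_sum, hstick m m]
        rw [show 2 * (m + 1) - 0 = 2 * m + 2 from by omega,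
          show m + 1 - 0 = m + 1 from rfl,
          show m + m + 1 = 2 * m + 1 from by omega, central m]
        push_cast
        rw [div_pow, one_pow]
        field_simp
        ring
      · set k' := m + 1 - k with hk'
        have hk'2 : 2 ≤ k' := by omega
        have h := hmid (m + 1) k' hk'2 (by omega)
        rw [show m + 1 - k' = k from by omega] at h
        simp only [Nat.add_sub_cancel] at h
        rw [h]
        have hterm : ∀ l ∈ Finset.range (k' + 1),
            (1 / 2 : ℝ) ^ (k' - l) * c m (m - l) = (1 / 2 : ℝ) ^ k' * ((m + l).choose l : ℝ) := by
          intro l hl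
          rw [Finset.mem_range] at hl
          have hlm : l ≤ m := by omega
          have e1 : 2 * m - (m - l) = m + l := by omega
          have e2 : m - (m - l) = l := by omega
          have e3 : (m + l).choose m = (m + l).choose l := by
            have := Nat.choose_symm (show m ≤ m + l from Nat.le_add_right _ _)
            rw [Nat.add_sub_cancel_left] at this
            omega
          rw [IH (m - l) (by omega), e1, e2, e3]
          rw [div_pow, div_pow, one_pow, one_pow, div_mul_div_comm, one_mul,
            ← pow_add, show (k' - l) + l = k' from by omega]
          ring
        rw [Finset.sum_congr rfl hterm, ← Finset.mul_sum, ← Nat.cast_sum, hstick m k']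
        rw [show 2 * (m + 1) - k = m + k' + 1 from by omega]
        have e6 : (m + k' + 1).choose (m + 1) = (m + k' + 1).choose k' := by
          have := Nat.choose_symm (show m + 1 ≤ m + k' + 1 by omega)
          rw [show m + k' + 1 - (m + 1) = k' from by omega] at this
          omega
        rw [e6, div_pow, one_pow]
        field_simp
end

section
/- Let d_{m,k} be defined by d_{m,m} = 1 for all m ≥ 1, d_{2,1} = 1, d_{m,m-1} = Σ_{l=1}^{m-1} d_{l,l} = m-1, d_{m,m-k} = Σ_{l=1}^{k+1} d_{m-1,m-l} for 2 ≤ k ≤ m-2, and d_{m,1} = Σ_{l=1}^{m-1} d_{m-1,l}. Then for all m ≥ 1 and 1 ≤ k ≤ m, d_{m,k} = (k/(2m-k)) · (2m-k)!/(m! · (m-k)!). -/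
noncomputable def ff (m k : ℕ) : ℝ :=
  if 1 ≤ k ∧ k ≤ m then
    (k : ℝ) * ((2 * m - k - 1).factorial : ℝ) /
      ((m.factorial : ℝ) * ((m - k).factorial : ℝ))
  else 0

lemma ff_pos (m k : ℕ) (h1 : 1 ≤ k) (h2 : k ≤ m) :
    ff m k = (k : ℝ) * ((2 * m - k - 1).factorial : ℝ) /
      ((m.factorial : ℝ) * ((m - k).factorial : ℝ)) := by
  rw [ff, if_pos ⟨h1, h2⟩]

lemma ff_zero (m k : ℕ) (h : ¬ (1 ≤ k ∧ k ≤ m)) : ff m k = 0 := by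
  rw [ff, if_neg h]

lemma ff_diag (m : ℕ) (h : 1 ≤ m) : ff m m = 1 := by
  obtain ⟨n, rfl⟩ : ∃ n, m = n + 1 := ⟨m - 1, by omega⟩
  rw [ff_pos _ _ (by omega) le_rfl]
  rw [show 2 * (n + 1) - (n + 1) - 1 = n by omega, show (n + 1) - (n + 1) = 0 by omega,
    Nat.factorial_succ, Nat.factorial_zero]
  have h1 : (n.factorial : ℝ) ≠ 0 := by positivity
  have h2 : ((n : ℝ) + 1) ≠ 0 := by positivity
  push_cast
  field_simp

lemma key_one (n : ℕ) : ff (n + 2) 1 = ff (n + 2) 2 + ff (n + 1) 0 := by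
  rw [ff_zero (n + 1) 0 (by omega), ff_pos _ _ le_rfl (by omega), ff_pos _ _ (by omega) (by omega)]
  rw [show 2 * (n + 2) - 1 - 1 = (2 * n + 1) + 1 by omega, show (n + 2) - 1 = n + 1 by omega,
    show 2 * (n + 2) - 2 - 1 = 2 * n + 1 by omega, show (n + 2) - 2 = n by omega,
    Nat.factorial_succ (2 * n + 1), Nat.factorial_succ n]
  have h1 : ((2 * n + 1).factorial : ℝ) ≠ 0 := by positivity
  have h2 : ((n + 2).factorial : ℝ) ≠ 0 := by positivity
  have h3 : (n.factorial : ℝ) ≠ 0 := by positivity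
  have h4 : ((n : ℝ) + 1) ≠ 0 := by positivity
  push_cast
  field_simp
  ring

lemma key_core (i b : ℕ) :
    ff (i + b + 3) (i + 2) = ff (i + b + 3) (i + 3) + ff (i + b + 2) (i + 1) := by
  rw [ff_pos _ _ (by omega) (by omega), ff_pos _ _ (by omega) (by omega),
    ff_pos _ _ (by omega) (by omega)]
  rw [show 2 * (i + b + 3) - (i + 2) - 1 = (i + 2 * b + 2) + 1 by omega,
    show (i + b + 3) - (i + 2) = b + 1 by omega,
    show 2 * (i + b + 3) - (i + 3) - 1 = i + 2 * b + 2 by omega,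
    show (i + b + 3) - (i + 3) = b by omega,
    show 2 * (i + b + 2) - (i + 1) - 1 = i + 2 * b + 2 by omega,
    show (i + b + 2) - (i + 1) = b + 1 by omega,
    show i + b + 3 = (i + b + 2) + 1 from rfl,
    Nat.factorial_succ (i + 2 * b + 2), Nat.factorial_succ (i + b + 2), Nat.factorial_succ b]
  have h1 : ((i + 2 * b + 2).factorial : ℝ) ≠ 0 := by positivity
  have h2 : ((i + b + 2).factorial : ℝ) ≠ 0 := by positivity
  have h3 : (b.factorial : ℝ) ≠ 0 := by positivity
  have h4 : ((i : ℝ) + b + 2 + 1) ≠ 0 := by positivity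
  have h5 : ((b : ℝ) + 1) ≠ 0 := by positivity
  push_cast
  field_simp
  ring

lemma key (m j : ℕ) (hm : 2 ≤ m) (hj1 : 1 ≤ j) (hj2 : j ≤ m) :
    ff m j = ff m (j + 1) + ff (m - 1) (j - 1) := by
  rcases eq_or_lt_of_le hj2 with rfl | hlt
  · rw [ff_zero j (j + 1) (by omega), ff_diag j (by omega), ff_diag (j - 1) (by omega)]
    ring
  · rcases Nat.eq_or_lt_of_le hj1 with rfl | hj2'
    · obtain ⟨n, rfl⟩ : ∃ n, m = n + 2 := ⟨m - 2, by omega⟩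
      simpa using key_one n
    · obtain ⟨i, rfl⟩ : ∃ i, j = i + 2 := ⟨j - 2, by omega⟩
      obtain ⟨b, rfl⟩ : ∃ b, m = i + b + 3 := ⟨m - i - 3, by omega⟩
      simpa using key_core i b

lemma sum_tel (m : ℕ) (hm : 2 ≤ m) : ∀ t, t ≤ m - 1 →
    ∑ l ∈ Finset.Icc 1 (t + 1), ff (m - 1) (m - l) = ff m (m - t) := by
  intro t
  induction t with
  | zero =>
    intro _
    simp only [Finset.Icc_self, Finset.sum_singleton, Nat.sub_zero]
    rw [ff_diag (m - 1) (by omega), ff_diag m (by omega)]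
  | succ t ih =>
    intro ht
    rw [Finset.sum_Icc_succ_top (by omega), ih (by omega)]
    have hk := key m (m - t - 1) hm (by omega) (by omega)
    rw [show m - t - 1 + 1 = m - t by omega] at hk
    rw [show m - (t + 1) = m - t - 1 by omega, hk, show m - t - 1 - 1 = m - (t + 1 + 1) by omega]

lemma ff_closed (m k : ℕ) (h1 : 1 ≤ k) (h2 : k ≤ m) :
    ff m k = ((k : ℝ) / (2 * (m : ℝ) - k)) * ((2 * m - k).factorial : ℝ) /
      ((m.factorial : ℝ) * ((m - k).factorial : ℝ)) := by
  rw [ff_pos _ _ h1 h2, show 2 * m - k = (2 * m - k - 1) + 1 by omega, Nat.factorial_succ]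
  have e2 : ((2 * m - k - 1 + 1 : ℕ) : ℝ) = 2 * (m : ℝ) - k := by
    have : (2 * m - k - 1 + 1 : ℕ) = 2 * m - k := by omega
    rw [this, Nat.cast_sub (by omega)]
    push_cast; ring
  rw [Nat.cast_mul, e2]
  have hc : 2 * (m : ℝ) - k ≠ 0 := by
    have : (k : ℝ) ≤ m := by exact_mod_cast h2
    have : (1 : ℝ) ≤ m := by exact_mod_cast h1.trans h2
    nlinarith
  simp only [Nat.add_sub_cancel]
  field_simp

theorem stmt2 (d : ℕ → ℕ → ℝ)
    (hdiag : ∀ m, 1 ≤ m → d m m = 1)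
    (h21 : d 2 1 = 1)
    (hsub : ∀ m, 2 ≤ m → d m (m - 1) = ∑ l ∈ Finset.Icc 1 (m - 1), d l l)
    (hmid : ∀ m k, 2 ≤ k → k ≤ m - 2 →
      d m (m - k) = ∑ l ∈ Finset.Icc 1 (k + 1), d (m - 1) (m - l))
    (h1 : ∀ m, 2 ≤ m → d m 1 = ∑ l ∈ Finset.Icc 1 (m - 1), d (m - 1) l) :
    ∀ m k, 1 ≤ k → k ≤ m →
      d m k = ((k : ℝ) / (2 * (m : ℝ) - k)) * ((2 * m - k).factorial : ℝ) /
        (m.factorial * (m - k).factorial) := by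
  intro m
  induction m using Nat.strong_induction_on with
  | _ m IH =>
    intro k hk1 hk2
    rw [← ff_closed m k hk1 hk2]
    by_cases hkm : k = m
    · subst hkm
      rw [hdiag k (by omega), ff_diag k (by omega)]
    · have hklt : k < m := lt_of_le_of_ne hk2 hkm
      by_cases hks : k = m - 1
      · subst hks
        have hm2 : 2 ≤ m := by omega
        rw [hsub m hm2]
        have hc : ∀ l ∈ Finset.Icc 1 (m - 1), d l l = 1 := fun l hl =>
          hdiag l (Finset.mem_Icc.mp hl).1
        rw [Finset.sum_congr rfl hc, Finset.sum_const, Nat.card_Icc, nsmul_eq_mul, mul_one]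
        obtain ⟨n, rfl⟩ : ∃ n, m = n + 2 := ⟨m - 2, by omega⟩
        simp only [show n + 2 - 1 = n + 1 by omega, show n + 1 + 1 - 1 = n + 1 by omega]
        rw [ff_pos _ _ (by omega) (by omega)]
        rw [show 2 * (n + 2) - (n + 1) - 1 = n + 2 by omega,
          show (n + 2) - (n + 1) = 1 by omega,
          Nat.factorial_one]
        have h2 : ((n + 2).factorial : ℝ) ≠ 0 := by positivity
        push_cast
        field_simp
      · by_cases hk1' : k = 1
        · subst hk1'
          have hm3 : 3 ≤ m := by omega
          rw [h1 m (by omega)]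
          have hc : ∀ l ∈ Finset.Icc 1 (m - 1), d (m - 1) l = ff (m - 1) l := by
            intro l hl
            obtain ⟨hl1, hl2⟩ := Finset.mem_Icc.mp hl
            rw [IH (m - 1) (by omega) l hl1 hl2, ← ff_closed (m - 1) l hl1 hl2]
          rw [Finset.sum_congr rfl hc]
          have reind : ∑ l ∈ Finset.Icc 1 (m - 1), ff (m - 1) l
              = ∑ l ∈ Finset.Icc 1 (m - 1), ff (m - 1) (m - l) := by
            apply Finset.sum_nbij' (fun l => m - l) (fun l => m - l)
            all_goals intro a ha
            all_goals simp only [Finset.mem_Icc] at *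
            · omega
            · omega
            · omega
            · omega
            · rw [show m - (m - a) = a by omega]
          rw [reind]
          have hst := sum_tel m (by omega) (m - 2) (by omega)
          rw [show m - 2 + 1 = m - 1 by omega, show m - (m - 2) = 2 by omega] at hst
          rw [hst]
          have hk := key m 1 (by omega) le_rfl (by omega)
          rw [ff_zero (m - 1) (1 - 1) (by omega)] at hk
          simpa using hk.symm
        · have hmk := hmid m (m - k) (by omega) (by omega)
          rw [show m - (m - k) = k by omega] at hmk
          rw [hmk]
          have hc : ∀ l ∈ Finset.Icc 1 (m - k + 1), d (m - 1) (m - l) = ff (m - 1) (m - l) := by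
            intro l hl
            obtain ⟨hl1, hl2⟩ := Finset.mem_Icc.mp hl
            rw [IH (m - 1) (by omega) (m - l) (by omega) (by omega),
              ← ff_closed (m - 1) (m - l) (by omega) (by omega)]
          rw [Finset.sum_congr rfl hc]
          have hst := sum_tel m (by omega) (m - k) (by omega)
          rw [show m - (m - k) = k by omega] at hst
          exact hst
end

section
/- For all z > 0 and all x ∈ [0,1], cosh(z(1-x))·sinh(2z) - sinh(z(1+x)) ≤ sinh(z(1-x))·sinh(2z) + (1/2)e^{-z}. -/
theorem stmt8 (z x : ℝ) (hz : 0 < z) (hx0 : 0 ≤ x) (hx1 : x ≤ 1) :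
    Real.cosh (z * (1 - x)) * Real.sinh (2 * z) - Real.sinh (z * (1 + x))
      ≤ Real.sinh (z * (1 - x)) * Real.sinh (2 * z) + (1 / 2) * Real.exp (-z) := by
  have e1 : Real.exp (-(z*(1-x))) * Real.exp (2*z) = Real.exp (z*(1+x)) := by
    rw [← Real.exp_add]; ring_nf
  have e2 : Real.exp (-(z*(1-x))) * Real.exp (-(2*z)) = Real.exp (-(z*(3-x))) := by
    rw [← Real.exp_add]; ring_nf
  have h3 : (0:ℝ) < Real.exp (-(z*(3-x))) := Real.exp_pos _
  have h4 : Real.exp (-(z*(1+x))) ≤ Real.exp (-z) := by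
    apply Real.exp_le_exp.2; nlinarith
  rw [Real.cosh_eq, Real.sinh_eq, Real.sinh_eq, Real.sinh_eq] at *
  nlinarith [h4, e1, e2, h3]
end

section
/- Let z > 0, x ∈ ℝ, and for a nonnegative integer k define K_k = ∫_x^1 (z y)^k cosh(2z(1-y)) dy. Then for every k ≥ 2, K_k = (k!/(2z)) · ( P_{1,k} sinh(2z(1-x)) + P_{2,k} cosh(2z(1-x)) - P_{0,k} ), where P_{0,k} = Σ_{l odd, 0≤l≤k} z^{k-l}/(2^l (k-l)!), P_{1,k} = Σ_{l even, 0≤l≤k} (zx)^{k-l}/(2^l (k-l)!), and P_{2,k} = Σ_{l odd, 0≤l≤k} (zx)^{k-l}/(2^l (k-l)!). -/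
open Finset

private lemma stmt16_id1 (z y : ℝ) (k : ℕ) :
    (∑ l ∈ (Finset.range (k + 1)).filter (fun l => Even l),
        ((k - l : ℕ) : ℝ) * (z * y) ^ (k - l - 1) * z / (2 ^ l * (k - l).factorial))
      = 2 * z * ∑ l ∈ (Finset.range (k + 1)).filter (fun l => Odd l),
          (z * y) ^ (k - l) / (2 ^ l * (k - l).factorial) := by
  rw [Finset.mul_sum, Finset.sum_filter, Finset.sum_filter,
    Finset.sum_range_succ, Finset.sum_range_succ']
  have h0 : (if Odd 0 then 2 * z * ((z * y) ^ (k - 0) / (2 ^ 0 * ((k - 0).factorial : ℝ)))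
      else 0) = 0 := by simp
  have hk : (if Even k then ((k - k : ℕ) : ℝ) * (z * y) ^ (k - k - 1) * z /
      (2 ^ k * ((k - k).factorial : ℝ)) else 0) = 0 := by simp
  rw [h0, hk, add_zero, add_zero]
  refine Finset.sum_congr rfl fun i hi => ?_
  have hik : i < k := Finset.mem_range.mp hi
  by_cases h : Even i
  · have h' : Odd (i + 1) := Even.add_one h
    rw [if_pos h, if_pos h']
    have h1 : k - (i + 1) = k - i - 1 := by omega
    have h2 : k - i = (k - i - 1) + 1 := by omega
    rw [h1, h2, Nat.factorial_succ, pow_succ]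
    have hf : ((k - i - 1).factorial : ℝ) ≠ 0 := Nat.cast_ne_zero.mpr (Nat.factorial_ne_zero _)
    have hp : (2 : ℝ) ^ i ≠ 0 := by positivity
    push_cast
    field_simp
  · have h' : ¬ Odd (i + 1) := by
      rw [Nat.odd_add_one]; exact not_not_intro (Nat.not_even_iff_odd.mp h)
    rw [if_neg h, if_neg h']

private lemma stmt16_id2 (z y : ℝ) (k : ℕ) :
    (∑ l ∈ (Finset.range (k + 1)).filter (fun l => Odd l),
        ((k - l : ℕ) : ℝ) * (z * y) ^ (k - l - 1) * z / (2 ^ l * (k - l).factorial))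
      + 2 * z * ((z * y) ^ k / k.factorial)
      = 2 * z * ∑ l ∈ (Finset.range (k + 1)).filter (fun l => Even l),
          (z * y) ^ (k - l) / (2 ^ l * (k - l).factorial) := by
  rw [Finset.mul_sum, Finset.sum_filter, Finset.sum_filter,
    Finset.sum_range_succ, Finset.sum_range_succ']
  have h0 : (if Even 0 then 2 * z * ((z * y) ^ (k - 0) / (2 ^ 0 * ((k - 0).factorial : ℝ)))
      else 0) = 2 * z * ((z * y) ^ k / k.factorial) := by norm_num
  have hk : (if Odd k then ((k - k : ℕ) : ℝ) * (z * y) ^ (k - k - 1) * z /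
      (2 ^ k * ((k - k).factorial : ℝ)) else 0) = 0 := by simp
  rw [h0, hk, add_zero]
  congr 1
  refine Finset.sum_congr rfl fun i hi => ?_
  have hik : i < k := Finset.mem_range.mp hi
  by_cases h : Odd i
  · have h' : Even (i + 1) := Odd.add_one h
    rw [if_pos h, if_pos h']
    have h1 : k - (i + 1) = k - i - 1 := by omega
    have h2 : k - i = (k - i - 1) + 1 := by omega
    rw [h1, h2, Nat.factorial_succ, pow_succ]
    have hf : ((k - i - 1).factorial : ℝ) ≠ 0 := Nat.cast_ne_zero.mpr (Nat.factorial_ne_zero _)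
    have hp : (2 : ℝ) ^ i ≠ 0 := by positivity
    push_cast
    field_simp
  · have h2 : Even i := Nat.not_odd_iff_even.mp h
    have h' : ¬ Even (i + 1) := by rw [Nat.even_add_one]; exact not_not_intro h2
    rw [if_neg h, if_neg h']

private lemma stmt16_deriv (z : ℝ) (hz : 0 < z) (k : ℕ) (y : ℝ) :
    HasDerivAt (fun t : ℝ => (k.factorial : ℝ) / (2 * z) *
      (-((∑ l ∈ (Finset.range (k + 1)).filter (fun l => Even l),
            (z * t) ^ (k - l) / (2 ^ l * (k - l).factorial)) * Real.sinh (2 * z * (1 - t))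
        + (∑ l ∈ (Finset.range (k + 1)).filter (fun l => Odd l),
            (z * t) ^ (k - l) / (2 ^ l * (k - l).factorial)) * Real.cosh (2 * z * (1 - t)))))
      ((z * y) ^ k * Real.cosh (2 * z * (1 - y))) y := by
  have hzy : HasDerivAt (fun t : ℝ => z * t) z y := by
    simpa using (hasDerivAt_id y).const_mul z
  have harg : HasDerivAt (fun t : ℝ => 2 * z * (1 - t)) (-(2 * z)) y := by
    have := ((hasDerivAt_id y).const_sub 1).const_mul (2 * z)
    simpa using this
  have hsinh : HasDerivAt (fun t : ℝ => Real.sinh (2 * z * (1 - t)))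
      (Real.cosh (2 * z * (1 - y)) * -(2 * z)) y := harg.sinh
  have hcosh : HasDerivAt (fun t : ℝ => Real.cosh (2 * z * (1 - t)))
      (Real.sinh (2 * z * (1 - y)) * -(2 * z)) y := harg.cosh
  have hA : HasDerivAt (fun t : ℝ => ∑ l ∈ (Finset.range (k + 1)).filter (fun l => Even l),
      (z * t) ^ (k - l) / (2 ^ l * (k - l).factorial))
      (∑ l ∈ (Finset.range (k + 1)).filter (fun l => Even l),
        ((k - l : ℕ) : ℝ) * (z * y) ^ (k - l - 1) * z / (2 ^ l * (k - l).factorial)) y := by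
    refine HasDerivAt.fun_sum fun l _ => ?_
    exact (hzy.pow (k - l)).div_const _
  have hB : HasDerivAt (fun t : ℝ => ∑ l ∈ (Finset.range (k + 1)).filter (fun l => Odd l),
      (z * t) ^ (k - l) / (2 ^ l * (k - l).factorial))
      (∑ l ∈ (Finset.range (k + 1)).filter (fun l => Odd l),
        ((k - l : ℕ) : ℝ) * (z * y) ^ (k - l - 1) * z / (2 ^ l * (k - l).factorial)) y := by
    refine HasDerivAt.fun_sum fun l _ => ?_
    exact (hzy.pow (k - l)).div_const _
  have hH := ((hA.fun_mul hsinh).fun_add (hB.fun_mul hcosh)).fun_neg.const_mul ((k.factorial : ℝ) / (2 * z))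
  refine hH.congr_deriv ?_
  set A' := ∑ l ∈ (Finset.range (k + 1)).filter (fun l => Even l),
    ((k - l : ℕ) : ℝ) * (z * y) ^ (k - l - 1) * z / (2 ^ l * (k - l).factorial) with hA'
  set B' := ∑ l ∈ (Finset.range (k + 1)).filter (fun l => Odd l),
    ((k - l : ℕ) : ℝ) * (z * y) ^ (k - l - 1) * z / (2 ^ l * (k - l).factorial) with hB'
  set A := ∑ l ∈ (Finset.range (k + 1)).filter (fun l => Even l),
    (z * y) ^ (k - l) / (2 ^ l * (k - l).factorial)
  set B := ∑ l ∈ (Finset.range (k + 1)).filter (fun l => Odd l),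
    (z * y) ^ (k - l) / (2 ^ l * (k - l).factorial)
  have e1 : A' = 2 * z * B := stmt16_id1 z y k
  have e2 : B' = 2 * z * A - 2 * z * ((z * y) ^ k / k.factorial) := by
    have := stmt16_id2 z y k
    linarith
  rw [e1, e2]
  have hf : (k.factorial : ℝ) ≠ 0 := Nat.cast_ne_zero.mpr (Nat.factorial_ne_zero _)
  have hz' : z ≠ 0 := ne_of_gt hz
  field_simp
  ring

theorem stmt16 (z x : ℝ) (hz : 0 < z) (k : ℕ) (hk : 2 ≤ k) :
    (∫ y in x..1, (z * y) ^ k * Real.cosh (2 * z * (1 - y)))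
      = (k.factorial : ℝ) / (2 * z) *
        ((∑ l ∈ (Finset.range (k + 1)).filter (fun l => Even l),
            (z * x) ^ (k - l) / (2 ^ l * (k - l).factorial)) * Real.sinh (2 * z * (1 - x))
        + (∑ l ∈ (Finset.range (k + 1)).filter (fun l => Odd l),
            (z * x) ^ (k - l) / (2 ^ l * (k - l).factorial)) * Real.cosh (2 * z * (1 - x))
        - (∑ l ∈ (Finset.range (k + 1)).filter (fun l => Odd l),
            z ^ (k - l) / (2 ^ l * (k - l).factorial))) := by
  have hint : IntervalIntegrable (fun y : ℝ => (z * y) ^ k * Real.cosh (2 * z * (1 - y)))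
      MeasureTheory.volume x 1 := by
    apply Continuous.intervalIntegrable
    continuity
  have := intervalIntegral.integral_eq_sub_of_hasDerivAt
    (fun y _ => stmt16_deriv z hz k y) hint
  rw [this]
  simp only [sub_self, mul_zero, Real.sinh_zero, Real.cosh_zero, mul_one, mul_zero, zero_add]
  ring
end
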